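/- Let R → S be a ring homomorphism of commutative rings. If S is integral over the image of R, then the induced morphism Spec S → Spec R is a closed map, and conversely if R → S is of finite type and Spec S → Spec R is universally closed then S is integral over R. -/

import Mathlib

open TensorProduct

universe u

/-- An integral ring map induces a closed map on prime spectra; conversely, a finite type
ring map whose induced map on spectra is universally closed is integral. -/
theorem integral_iff_specComap_universally_closed
    {R S : Type u} [CommRing R] [CommRing S] [Algebra R S] :
    (Algebra.IsIntegral R S → IsClosedMap (PrimeSpectrum.comap (algebraMap R S))) ∧
      ((Algebra.FiniteType R S ∧
          ∀ (R' : Type u) [CommRing R'] [Algebra R R'],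
            IsClosedMap (PrimeSpectrum.comap (algebraMap R' (R' ⊗[R] S)))) →
        Algebra.IsIntegral R S) := by
  constructor
  · intro h
    exact PrimeSpectrum.isClosedMap_comap_of_isIntegral _ h.isIntegral
  · rintro ⟨-, h⟩
    have hX := h (Polynomial R)
    -- transport along `R[X] ⊗[R] S ≃+* S[X]`
    let e : Polynomial R ⊗[R] S ≃+* Polynomial S :=
      ((Algebra.TensorProduct.comm R (Polynomial R) S).trans
        (polyEquivTensor R S).symm).toRingEquiv
    have key : Polynomial.mapRingHom (algebraMap R S) =
        (e : Polynomial R ⊗[R] S →+* Polynomial S).comp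
          (algebraMap (Polynomial R) (Polynomial R ⊗[R] S)) := by
      ext p <;>
        simp [e, polyEquivTensor_symm_apply_tmul, Algebra.TensorProduct.algebraMap_apply,
          Polynomial.monomial_one_one_eq_X]
    let he : PrimeSpectrum (Polynomial S) ≃ₜ PrimeSpectrum (Polynomial R ⊗[R] S) :=
      { toFun := PrimeSpectrum.comap (e : Polynomial R ⊗[R] S →+* Polynomial S)
        invFun := PrimeSpectrum.comap (e.symm : Polynomial S →+* Polynomial R ⊗[R] S)
        left_inv := fun x => by
          rw [← PrimeSpectrum.comap_comp_apply]
          simp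
        right_inv := fun x => by
          rw [← PrimeSpectrum.comap_comp_apply]
          simp
        continuous_toFun := PrimeSpectrum.continuous_comap _
        continuous_invFun := PrimeSpectrum.continuous_comap _ }
    have hc : IsClosedMap (PrimeSpectrum.comap (Polynomial.mapRingHom (algebraMap R S))) := by
      rw [key, PrimeSpectrum.comap_comp]
      exact hX.comp he.isClosedMap
    have := PrimeSpectrum.isIntegral_of_isClosedMap_comap_mapRingHom _ hc
    exact Algebra.isIntegral_def.mpr this
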